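/- arXiv:2510.12625 — 3 statements merged into one kernel-verified Lean document; each statement's English description precedes it below -/
import Mathlib

section
/- Let R be a Dedekind domain with fraction field K and let A be a commutative R-algebra that is flat as an R-module; write ι : A → K ⊗[R] A for the canonical algebra map a ↦ 1 ⊗ a (which is injective since A is R-flat). Then the assignments J ↦ (the ideal of K ⊗[R] A generated by ι(J)) and I ↦ ι⁻¹(I) are mutually inverse bijections between the set of ideals J of A for which the quotient A/J is a flat R-module and the set of all ideals of K ⊗[R] A. -/
open TensorProduct

section Aux

variable {R : Type*} [CommRing R] [IsDomain R]

/-- Flat modules over a domain are torsion-free. -/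
lemma flat_isSMulRegular {M : Type*} [AddCommGroup M] [Module R M] [Module.Flat R M]
    {c : R} (hc : c ≠ 0) : IsSMulRegular M c := by
  have hR : IsSMulRegular R c := fun x y hxy => by
    exact mul_left_cancel₀ hc (by simpa [smul_eq_mul] using hxy)
  have h2 : IsSMulRegular (M ⊗[R] R) c := hR.lTensor M
  intro x y hxy
  have hxy' := congrArg (TensorProduct.rid R M).symm hxy
  simp only [map_smul] at hxy'
  exact (TensorProduct.rid R M).symm.injective (h2 hxy')

/-- "Division by `c`" linear map on an ideal: if `b * x ∈ (c)` for all `x ∈ I`, the map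
`x ↦ (b * x)/c` is a well-defined linear map `I →ₗ[R] R`. -/
noncomputable def divSigma {I : Ideal R} {c b : R} (hc : c ≠ 0)
    (hb : ∀ x ∈ I, ∃ r : R, c * r = b * x) : I →ₗ[R] R where
  toFun x := (hb x x.2).choose
  map_add' x y := mul_left_cancel₀ hc <| by
    rw [(hb _ (x + y).2).choose_spec, mul_add, (hb _ x.2).choose_spec, (hb _ y.2).choose_spec,
      Submodule.coe_add, mul_add]
  map_smul' r x := mul_left_cancel₀ hc <| by
    rw [(hb _ (r • x).2).choose_spec, RingHom.id_apply, smul_eq_mul, mul_left_comm c r,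
      (hb _ x.2).choose_spec, SetLike.val_smul, smul_eq_mul, mul_left_comm b r]

lemma divSigma_spec {I : Ideal R} {c b : R} (hc : c ≠ 0)
    (hb : ∀ x ∈ I, ∃ r : R, c * r = b * x) (x : I) :
    c * divSigma hc hb x = b * (x : R) := (hb x x.2).choose_spec

/-- In a Dedekind domain, every nonzero ideal `I` admits `c ≠ 0` and finite families
`a t ∈ I`, `b t` with `b t * I ⊆ (c)` and `∑ a t * b t = c` (invertibility of `I`). -/
lemma exists_rep [IsDedekindDomain R] (I : Ideal R) (hI : I ≠ ⊥) :
    ∃ c : R, c ≠ 0 ∧ ∃ n : ℕ, ∃ a b : Fin n → R, (∀ t, a t ∈ I) ∧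
      (∀ t, ∀ x ∈ I, ∃ r : R, c * r = b t * x) ∧ (∑ t, a t * b t) = c := by
  obtain ⟨c, hcI, hc⟩ := Submodule.exists_mem_ne_zero_of_ne_bot hI
  obtain ⟨J, hJ⟩ := Ideal.dvd_iff_le.mpr ((Ideal.span_singleton_le_iff_mem _).mpr hcI)
  have hcIJ : c ∈ I * J := by rw [← hJ]; exact Ideal.mem_span_singleton_self c
  have key : ∀ r ∈ (I * J : Ideal R), ∃ n : ℕ, ∃ a b : Fin n → R,
      (∀ t, a t ∈ I) ∧ (∀ t, b t ∈ J) ∧ (∑ t, a t * b t) = r := by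
    intro r hr
    refine Submodule.mul_induction_on hr
      (fun x hx y hy => ⟨1, fun _ => x, fun _ => y, fun _ => hx, fun _ => hy, by simp⟩) ?_
    rintro r₁ r₂ ⟨n₁, a₁, b₁, ha₁, hb₁, h₁⟩ ⟨n₂, a₂, b₂, ha₂, hb₂, h₂⟩
    refine ⟨n₁ + n₂, Fin.append a₁ a₂, Fin.append b₁ b₂, fun t => ?_, fun t => ?_, ?_⟩
    · exact Fin.addCases (fun i => by rw [Fin.append_left]; exact ha₁ i)
        (fun i => by rw [Fin.append_right]; exact ha₂ i) t
    · exact Fin.addCases (fun i => by rw [Fin.append_left]; exact hb₁ i)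
        (fun i => by rw [Fin.append_right]; exact hb₂ i) t
    · rw [Fin.sum_univ_add]
      simp only [Fin.append_left, Fin.append_right]
      rw [h₁, h₂]
  obtain ⟨n, a, b, ha, hb, hsum⟩ := key c hcIJ
  refine ⟨c, hc, n, a, b, ha, fun t x hx => ?_, hsum⟩
  have hmem : b t * x ∈ Ideal.span {c} := by
    rw [hJ, mul_comm I J]
    exact Ideal.mul_mem_mul (hb t) hx
  rw [Ideal.mem_span_singleton'] at hmem
  obtain ⟨r, hr⟩ := hmem
  exact ⟨r, by rw [mul_comm]; exact hr⟩

/-- Over a Dedekind domain, torsion-free modules are flat. -/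
theorem flat_of_torsionFree [IsDedekindDomain R] (M : Type*) [AddCommGroup M] [Module R M]
    (hM : ∀ c : R, c ≠ 0 → IsSMulRegular M c) : Module.Flat R M := by
  rw [Module.Flat.iff_rTensor_injective']
  intro I
  by_cases hI : I = ⊥
  · subst hI
    have hz : ∀ z : (⊥ : Ideal R) ⊗[R] M, z = 0 := by
      intro z
      refine z.induction_on rfl (fun x m => ?_) (fun u v hu hv => by rw [hu, hv, add_zero])
      have hx : x = 0 := Subtype.ext (Ideal.mem_bot.mp x.2)
      rw [hx, zero_tmul]
    exact fun x y _ => (hz x).trans (hz y).symm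
  · obtain ⟨c, hc, n, a, b, ha, hb, hsum⟩ := exists_rep I hI
    set σ : Fin n → (I →ₗ[R] R) := fun t => divSigma hc (hb t) with hσ
    set f : (I ⊗[R] M) →ₗ[R] M :=
      (TensorProduct.lid R M).toLinearMap ∘ₗ LinearMap.rTensor M I.subtype with hf
    set g : Fin n → ((I ⊗[R] M) →ₗ[R] M) := fun t =>
      (TensorProduct.lid R M).toLinearMap ∘ₗ LinearMap.rTensor M (σ t) with hg
    have claim1 : ∀ t, c • g t = b t • f := by
      intro t
      apply TensorProduct.ext'
      intro x m
      simp only [hg, hf, LinearMap.smul_apply, LinearMap.coe_comp, Function.comp_apply,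
        LinearMap.rTensor_tmul, LinearEquiv.coe_coe, TensorProduct.lid_tmul,
        Submodule.coe_subtype]
      rw [smul_smul, smul_smul, divSigma_spec]
    have claim2 : (∑ t, (TensorProduct.mk R I M ⟨a t, ha t⟩) ∘ₗ g t) = LinearMap.id := by
      apply TensorProduct.ext'
      intro x m
      simp only [LinearMap.sum_apply, LinearMap.coe_comp, Function.comp_apply,
        TensorProduct.mk_apply, LinearMap.id_apply, hg, LinearMap.rTensor_tmul,
        LinearEquiv.coe_coe, TensorProduct.lid_tmul]
      have step : ∀ t : Fin n, (⟨a t, ha t⟩ : I) ⊗ₜ[R] ((σ t x) • m)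
          = ((σ t x) • (⟨a t, ha t⟩ : I)) ⊗ₜ[R] m := fun t => (TensorProduct.smul_tmul _ _ _).symm
      rw [Finset.sum_congr rfl (fun t _ => step t), ← TensorProduct.sum_tmul]
      congr 1
      apply Subtype.ext
      apply mul_left_cancel₀ hc
      push_cast
      rw [Finset.mul_sum]
      have hterm : ∀ t : Fin n, c * (σ t x * a t) = a t * b t * (x : R) := by
        intro t
        rw [← mul_assoc, divSigma_spec]
        ring
      simp only [smul_eq_mul]
      rw [Finset.sum_congr rfl (fun t _ => hterm t), ← Finset.sum_mul, hsum]
    intro z w hzw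
    have hker : ∀ u : I ⊗[R] M, LinearMap.rTensor M I.subtype u = 0 → u = 0 := by
      intro u hu
      have hfu : f u = 0 := by rw [hf]; simp [hu]
      have hgu : ∀ t, g t u = 0 := by
        intro t
        have h1 := congrArg (fun φ : (I ⊗[R] M) →ₗ[R] M => φ u) (claim1 t)
        simp only [LinearMap.smul_apply] at h1
        refine hM c hc ?_
        show c • (g t) u = c • (0 : M)
        rw [h1, hfu, smul_zero, smul_zero]
      have h2 := congrArg (fun φ : (I ⊗[R] M) →ₗ[R] (I ⊗[R] M) => φ u) claim2
      simp only [LinearMap.sum_apply, LinearMap.coe_comp, Function.comp_apply,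
        LinearMap.id_apply] at h2
      rw [← h2]
      simp [hgu]
    have hzw' := hker (z - w) (by rw [map_sub, hzw, sub_self])
    exact sub_eq_zero.mp hzw'

end Aux

/-- For a Dedekind domain `R` with fraction field `K` and a flat commutative `R`-algebra `A`,
the maps `J ↦ ι(J)·(K ⊗[R] A)` (extension along `ι : A → K ⊗[R] A`, `a ↦ 1 ⊗ a`) and
`I ↦ ι⁻¹(I)` (contraction) are mutually inverse bijections between ideals `J` of `A` with
`A/J` flat over `R` and all ideals of `K ⊗[R] A`. -/
theorem stmt_0 (R K A : Type*) [CommRing R] [IsDomain R] [IsDedekindDomain R]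
    [Field K] [Algebra R K] [IsFractionRing R K]
    [CommRing A] [Algebra R A] [Module.Flat R A] :
    (∀ J : Ideal A, Module.Flat R (A ⧸ J) →
      Ideal.comap (Algebra.TensorProduct.includeRight : A →ₐ[R] K ⊗[R] A)
        (Ideal.map (Algebra.TensorProduct.includeRight : A →ₐ[R] K ⊗[R] A) J) = J) ∧
    (∀ I : Ideal (K ⊗[R] A),
      Module.Flat R
        (A ⧸ Ideal.comap (Algebra.TensorProduct.includeRight : A →ₐ[R] K ⊗[R] A) I) ∧
      Ideal.map (Algebra.TensorProduct.includeRight : A →ₐ[R] K ⊗[R] A)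
        (Ideal.comap (Algebra.TensorProduct.includeRight : A →ₐ[R] K ⊗[R] A) I) = I) := by
  classical
  letI : Algebra A (K ⊗[R] A) := Algebra.TensorProduct.rightAlgebra
  haveI : IsScalarTower R A (K ⊗[R] A) := Algebra.TensorProduct.right_isScalarTower
  haveI hloc : IsLocalization (Algebra.algebraMapSubmonoid A (nonZeroDivisors R)) (K ⊗[R] A) :=
    isLocalizedModule_iff_isLocalization.mp
      ((isLocalizedModule_iff_isBaseChange (nonZeroDivisors R) K _).mpr
        (TensorProduct.isPushout (R := R) (S := K) (T := A)).1)
  have hmapeq : ∀ J : Ideal A,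
      Ideal.map (Algebra.TensorProduct.includeRight : A →ₐ[R] K ⊗[R] A) J
        = Ideal.map (algebraMap A (K ⊗[R] A)) J := fun _ => rfl
  have hcomapeq : ∀ I : Ideal (K ⊗[R] A),
      Ideal.comap (Algebra.TensorProduct.includeRight : A →ₐ[R] K ⊗[R] A) I
        = Ideal.comap (algebraMap A (K ⊗[R] A)) I := fun _ => rfl
  have hsub : Algebra.algebraMapSubmonoid A (nonZeroDivisors R) ≤ nonZeroDivisors A := by
    rintro y hy
    obtain ⟨r, hr, rfl⟩ := hy
    rw [mem_nonZeroDivisors_iff_right]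
    intro z hz
    have hz' : r • z = 0 := by rw [Algebra.smul_def, mul_comm]; exact hz
    refine flat_isSMulRegular (M := A) (nonZeroDivisors.ne_zero hr) ?_
    show r • z = r • (0 : A)
    rw [hz', smul_zero]
  have hinj : Function.Injective (algebraMap A (K ⊗[R] A)) := IsLocalization.injective _ hsub
  constructor
  · intro J hJflat
    haveI := hJflat
    rw [hcomapeq, hmapeq]
    refine le_antisymm (fun x hx => ?_) Ideal.le_comap_map
    rw [Ideal.mem_comap] at hx
    obtain ⟨⟨j, s⟩, hs⟩ := (IsLocalization.mem_map_algebraMap_iff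
      (Algebra.algebraMapSubmonoid A (nonZeroDivisors R)) (K ⊗[R] A)).mp hx
    obtain ⟨r, hr, hrs⟩ := s.2
    have hxj : x * (s : A) = (j : A) := hinj (by rw [map_mul]; exact hs)
    have hrx : r • x ∈ J := by
      rw [Algebra.smul_def, mul_comm, hrs, hxj]
      exact j.2
    have h0 : Ideal.Quotient.mk J (r • x) = r • Ideal.Quotient.mk J x := by
      have h := map_smul (Ideal.Quotient.mkₐ R J).toLinearMap r x
      simpa only [AlgHom.toLinearMap_apply, Ideal.Quotient.mkₐ_eq_mk] using h
    have hreg : IsSMulRegular (A ⧸ J) r := flat_isSMulRegular (nonZeroDivisors.ne_zero hr)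
    have hmk : Ideal.Quotient.mk J x = 0 := by
      refine hreg ?_
      show r • Ideal.Quotient.mk J x = r • (0 : A ⧸ J)
      rw [← h0, Ideal.Quotient.eq_zero_iff_mem.mpr hrx, smul_zero]
    exact Ideal.Quotient.eq_zero_iff_mem.mp hmk
  · intro I
    constructor
    · apply flat_of_torsionFree
      intro c hc m₁ m₂ hm
      have hm' : c • m₁ = c • m₂ := hm
      refine sub_eq_zero.mp ?_
      obtain ⟨x, hx⟩ := Ideal.Quotient.mk_surjective (m₁ - m₂)
      rw [← hx]
      have hm0 : c • Ideal.Quotient.mk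
          (Ideal.comap (Algebra.TensorProduct.includeRight : A →ₐ[R] K ⊗[R] A) I) x = 0 := by
        rw [hx, smul_sub, hm', sub_self]
      have h0 : Ideal.Quotient.mk
          (Ideal.comap (Algebra.TensorProduct.includeRight : A →ₐ[R] K ⊗[R] A) I) (c • x)
          = c • Ideal.Quotient.mk
          (Ideal.comap (Algebra.TensorProduct.includeRight : A →ₐ[R] K ⊗[R] A) I) x := by
        have h := map_smul (Ideal.Quotient.mkₐ R
          (Ideal.comap (Algebra.TensorProduct.includeRight : A →ₐ[R] K ⊗[R] A) I)).toLinearMap c x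
        simpa only [AlgHom.toLinearMap_apply, Ideal.Quotient.mkₐ_eq_mk] using h
      have hcx : c • x ∈ Ideal.comap
          (Algebra.TensorProduct.includeRight : A →ₐ[R] K ⊗[R] A) I := by
        rw [← Ideal.Quotient.eq_zero_iff_mem, h0, hm0]
      rw [Ideal.mem_comap] at hcx
      have hcx' : algebraMap R (K ⊗[R] A) c *
          (Algebra.TensorProduct.includeRight : A →ₐ[R] K ⊗[R] A) x ∈ I := by
        have heq : (Algebra.TensorProduct.includeRight : A →ₐ[R] K ⊗[R] A) (c • x)
            = algebraMap R (K ⊗[R] A) c *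
              (Algebra.TensorProduct.includeRight : A →ₐ[R] K ⊗[R] A) x := by
          have h := map_smul (Algebra.TensorProduct.includeRight :
            A →ₐ[R] K ⊗[R] A).toLinearMap c x
          simp only [AlgHom.toLinearMap_apply] at h
          rw [h, Algebra.smul_def]
        rw [← heq]
        exact hcx
      have hcu : IsUnit (algebraMap R (K ⊗[R] A) c) := by
        rw [IsScalarTower.algebraMap_apply R K (K ⊗[R] A)]
        exact (IsLocalization.map_units (M := nonZeroDivisors R) K
          ⟨c, mem_nonZeroDivisors_of_ne_zero hc⟩).map (algebraMap K (K ⊗[R] A))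
      obtain ⟨u, hu⟩ := hcu
      have hxI : (Algebra.TensorProduct.includeRight : A →ₐ[R] K ⊗[R] A) x ∈ I := by
        have h1 := I.mul_mem_left (↑u⁻¹) hcx'
        rwa [← hu, ← mul_assoc, Units.inv_mul, one_mul] at h1
      rw [Ideal.Quotient.eq_zero_iff_mem]
      exact Ideal.mem_comap.mpr hxI
    · rw [hmapeq, hcomapeq]
      exact IsLocalization.map_comap (Algebra.algebraMapSubmonoid A (nonZeroDivisors R))
        (K ⊗[R] A) I
end

section
/- Let R be a commutative ring and R' a commutative R-algebra such that the structure map algebraMap R R' is injective. Let A and B be R-modules and suppose A is flat over R. Then the base-change map Hom_R(B, A) → Hom_{R'}(R' ⊗[R] B, R' ⊗[R] A), sending an R-linear map f to its extension of scalars f ⊗ id_{R'}, is injective. -/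
/-- If `R → R'` is an injective map of commutative rings, `A`, `B` are `R`-modules with `A`
flat over `R`, then the base-change map `Hom_R(B, A) → Hom_{R'}(R' ⊗[R] B, R' ⊗[R] A)`,
`f ↦ f ⊗ id`, is injective. -/
theorem stmt_2 (R R' A B : Type*) [CommRing R] [CommRing R'] [Algebra R R']
    (hinj : Function.Injective (algebraMap R R'))
    [AddCommGroup A] [Module R A] [AddCommGroup B] [Module R B]
    [Module.Flat R A] :
    Function.Injective (fun f : B →ₗ[R] A => LinearMap.baseChange R' f) := by
  have key : Function.Injective (fun a : A => (1 : R') ⊗ₜ[R] a) := by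
    have h1 : Function.Injective (LinearMap.rTensor A (Algebra.linearMap R R')) :=
      Module.Flat.rTensor_preserves_injective_linearMap _ hinj
    have heq : (fun a : A => (1 : R') ⊗ₜ[R] a) =
        (LinearMap.rTensor A (Algebra.linearMap R R')) ∘ (TensorProduct.lid R A).symm := by
      ext a; simp
    rw [heq]
    exact h1.comp (TensorProduct.lid R A).symm.injective
  intro f g h
  ext b
  have h2 := congrFun (congrArg DFunLike.coe h) ((1 : R') ⊗ₜ[R] b)
  simp only [LinearMap.baseChange_tmul] at h2
  exact key h2
end

section
/- Let Γ be a group such that the quotient D(Γ)/D²(Γ) of its derived subgroup by its second derived subgroup is cyclic of order 3, and such that D²(Γ) is finite of order at most 11. Then D²(Γ) is a 2-group, i.e., its order is a power of 2. -/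
open Subgroup
open scoped commutatorElement

/-! Auxiliary lemmas for the main theorem. -/

/-- Automorphisms of a cyclic group commute. -/
lemma aux_mulAut_comm {G : Type*} [Group G] [IsCyclic G] (a b : MulAut G) :
    a * b = b * a := by
  obtain ⟨m, hm⟩ := MonoidHom.map_cyclic a.toMonoidHom
  obtain ⟨n, hn⟩ := MonoidHom.map_cyclic b.toMonoidHom
  have ha : ∀ g : G, a g = g ^ m := hm
  have hb : ∀ g : G, b g = g ^ n := hn
  ext g
  simp only [MulAut.mul_apply]
  rw [hb g, ha (g ^ n), ha g, hb (g ^ m), ← zpow_mul, ← zpow_mul, mul_comm]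

/-- If the abelianization of `G` is cyclic, then `⁅⊤, D(G)⁆ = D(G)`. -/
lemma aux_commutator_top_comm {G : Type*} [Group G] [IsCyclic (Abelianization G)] :
    ⁅(⊤ : Subgroup G), commutator G⁆ = commutator G := by
  set K : Subgroup G := ⁅(⊤ : Subgroup G), commutator G⁆ with hKdef
  have hKle : K ≤ commutator G := Subgroup.commutator_le_right _ _
  let f : G ⧸ K →* Abelianization G :=
    QuotientGroup.lift K Abelianization.of (fun k hk =>
      (QuotientGroup.eq_one_iff k).mpr (hKle hk))
  have hker : f.ker ≤ Subgroup.center (G ⧸ K) := by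
    intro q hq
    obtain ⟨x, rfl⟩ := QuotientGroup.mk'_surjective K q
    have hx : x ∈ commutator G := by
      have hq1 : Abelianization.of x = 1 := hq
      exact (QuotientGroup.eq_one_iff x).mp hq1
    rw [Subgroup.mem_center_iff]
    intro y
    obtain ⟨g, rfl⟩ := QuotientGroup.mk'_surjective K y
    rw [← commutatorElement_eq_one_iff_mul_comm]
    have hgk : ⁅g, x⁆ ∈ K := Subgroup.commutator_mem_commutator (Subgroup.mem_top g) hx
    calc ⁅(QuotientGroup.mk' K) g, (QuotientGroup.mk' K) x⁆
        = (QuotientGroup.mk' K) ⁅g, x⁆ := (map_commutatorElement _ _ _).symm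
      _ = 1 := (QuotientGroup.eq_one_iff _).mpr hgk
  have hcomm : ∀ a b : G ⧸ K, a * b = b * a :=
    (commGroupOfCyclicCenterQuotient f hker).mul_comm
  have hge : commutator G ≤ K := by
    rw [_root_.commutator_def]
    refine Subgroup.commutator_le.mpr fun g₁ _ g₂ _ => ?_
    have h1 : (QuotientGroup.mk' K) ⁅g₁, g₂⁆ = 1 := by
      rw [map_commutatorElement, commutatorElement_eq_one_iff_mul_comm]
      exact hcomm _ _
    exact (QuotientGroup.eq_one_iff _).mp h1
  exact le_antisymm hKle hge

/-- Counting lemma: a fixed-point-free automorphism of order dividing 3 of a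
finite group forces the cardinality to be `≡ 1 mod 3`. -/
lemma aux_card_modeq_one {B : Type*} [Group B] [Finite B] (σ : MulAut B)
    (hσ3 : σ ^ 3 = 1) (hfpf : ∀ b : B, σ b = b → b = 1) : Nat.card B ≡ 1 [MOD 3] := by
  haveI : Fact (Nat.Prime 3) := ⟨by norm_num⟩
  set P : Subgroup (MulAut B) := Subgroup.zpowers σ with hPdef
  have hP : IsPGroup 3 P := by
    intro g
    refine ⟨1, ?_⟩
    obtain ⟨k, hk⟩ := Subgroup.mem_zpowers_iff.mp g.2
    have hg3 : (g : MulAut B) ^ (3 : ℕ) = 1 := by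
      calc (g : MulAut B) ^ (3 : ℕ) = (σ ^ k) ^ (3 : ℕ) := by rw [hk]
        _ = (σ ^ (3 : ℕ)) ^ k := by
            rw [← zpow_natCast (σ ^ k), ← zpow_mul, mul_comm, zpow_mul, zpow_natCast]
        _ = 1 := by rw [hσ3, one_zpow]
    refine Subtype.ext ?_
    push_cast
    simpa using hg3
  have hmod := hP.card_modEq_card_fixedPoints B
  have hfix : MulAction.fixedPoints P B = {1} := by
    ext b
    simp only [MulAction.mem_fixedPoints, Set.mem_singleton_iff]
    constructor
    · intro h
      exact hfpf b (h ⟨σ, Subgroup.mem_zpowers σ⟩)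
    · rintro rfl g
      obtain ⟨k, hk⟩ := Subgroup.mem_zpowers_iff.mp g.2
      show (g : MulAut B) (1 : B) = 1
      exact map_one _
  rw [hfix] at hmod
  simpa using hmod

/-- The `MulAut` functoriality of abelianization. -/
def aux_mulAutToAbAut (H : Type*) [Group H] : MulAut H →* MulAut (Abelianization H) where
  toFun e := e.abelianizationCongr
  map_one' := by
    refine MulEquiv.ext fun x => ?_
    refine QuotientGroup.induction_on x fun z => ?_
    rfl
  map_mul' a b := by
    refine MulEquiv.ext fun x => ?_
    refine QuotientGroup.induction_on x fun z => ?_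
    rfl

/-- The key counting consequence: if `Abelianization G` has cardinality 3 and
`D(G)` is finite, then the abelianization of `D(G)` has cardinality `≡ 1 mod 3`. -/
lemma aux_card_ab_comm_modeq (G : Type*) [Group G]
    (h3 : Nat.card (Abelianization G) = 3) [Finite ↥(commutator G)] :
    Nat.card (Abelianization ↥(commutator G)) ≡ 1 [MOD 3] := by
  haveI : Fact (Nat.Prime 3) := ⟨by norm_num⟩
  haveI hcyc : IsCyclic (Abelianization G) := isCyclic_of_prime_card h3
  set N : Subgroup G := commutator G with hN
  let B := Abelianization ↥N
  let Θ : G →* MulAut B := (aux_mulAutToAbAut ↥N).comp MulAut.conjNormal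
  have hΘN : ∀ n : G, n ∈ N → Θ n = 1 := by
    intro n hn
    refine MulEquiv.ext fun x => ?_
    refine QuotientGroup.induction_on x fun m => ?_
    show Abelianization.of (MulAut.conjNormal n m) = Abelianization.of m
    have key : MulAut.conjNormal (H := N) n m = ⟨n, hn⟩ * m * ⟨n, hn⟩⁻¹ := by
      ext
      simp [MulAut.conjNormal_apply]
    rw [key]
    simp only [map_mul, map_inv]
    rw [mul_right_comm, mul_inv_cancel, one_mul]
  obtain ⟨g1, hgen⟩ := hcyc.exists_generator
  have hsurj : Function.Surjective (Abelianization.of : G → Abelianization G) :=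
    fun x => QuotientGroup.induction_on x fun z => ⟨z, rfl⟩
  obtain ⟨g₀, hg₀⟩ := hsurj g1
  set σ : MulAut B := Θ g₀ with hσ
  have hg₀3 : g₀ ^ 3 ∈ N := by
    have h1 : (Abelianization.of g₀) ^ 3 = 1 := by rw [← h3]; exact pow_card_eq_one'
    rw [← map_pow] at h1
    exact (QuotientGroup.eq_one_iff _).mp h1
  have hσ3 : σ ^ 3 = 1 := by
    rw [hσ, ← map_pow]
    exact hΘN _ hg₀3
  let f : B →* B :=
    { toFun := fun b => σ b * b⁻¹
      map_one' := by simp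
      map_mul' := fun x y => by
        simp only [map_mul]
        rw [mul_inv, mul_mul_mul_comm] }
  let S : Subgroup (MulAut B) :=
    { carrier := {τ | ∀ b : B, τ b * b⁻¹ ∈ f.range}
      one_mem' := by
        intro b
        simp only [MulAut.one_apply, mul_inv_cancel]
        exact ⟨1, map_one f⟩
      mul_mem' := by
        intro τ₁ τ₂ h₁ h₂ b
        have key : (τ₁ * τ₂) b * b⁻¹ = (τ₁ (τ₂ b) * (τ₂ b)⁻¹) * (τ₂ b * b⁻¹) := by
          simp [MulAut.mul_apply, mul_assoc]
        rw [key]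
        exact mul_mem (h₁ _) (h₂ _)
      inv_mem' := by
        intro τ h b
        have h' := h (τ⁻¹ b)
        rw [MulAut.apply_inv_self] at h'
        have key : τ⁻¹ b * b⁻¹ = (b * (τ⁻¹ b)⁻¹)⁻¹ := by
          rw [mul_inv_rev, inv_inv]
        rw [key]
        exact inv_mem h' }
  have hσS : σ ∈ S := fun b => ⟨b, rfl⟩
  have hΘS : ∀ g : G, Θ g ∈ S := by
    intro g
    obtain ⟨k, hk⟩ := Subgroup.mem_zpowers_iff.mp (hgen (Abelianization.of g))
    have heq : Abelianization.of (g₀ ^ k) = Abelianization.of g := by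
      rw [map_zpow, hg₀, hk]
    have hmem : (g₀ ^ k)⁻¹ * g ∈ N := by
      refine (QuotientGroup.eq_one_iff _).mp ?_
      show Abelianization.of ((g₀ ^ k)⁻¹ * g) = 1
      rw [map_mul, map_inv, heq, inv_mul_cancel]
    have hgdecomp : g = g₀ ^ k * ((g₀ ^ k)⁻¹ * g) := by group
    rw [hgdecomp, map_mul, map_zpow]
    rw [hΘN _ hmem, mul_one]
    exact Subgroup.zpow_mem S hσS k
  have hfsurj : Function.Surjective f := by
    intro x
    refine QuotientGroup.induction_on x fun m => ?_
    obtain ⟨m, hm⟩ := m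
    have hcl : Subgroup.closure {x : G | ∃ p ∈ (⊤ : Subgroup G), ∃ q ∈ N, ⁅p, q⁆ = x} = N := by
      rw [← Subgroup.commutator_def, aux_commutator_top_comm]
    have hmm : m ∈ Subgroup.closure {x : G | ∃ p ∈ (⊤ : Subgroup G), ∃ q ∈ N, ⁅p, q⁆ = x} := by
      rw [hcl]; exact hm
    have main : ∀ hx' : m ∈ N, ∃ a, f a = Abelianization.of (⟨m, hx'⟩ : ↥N) := by
      refine Subgroup.closure_induction
        (p := fun x _ => ∀ hx' : x ∈ N, ∃ a, f a = Abelianization.of (⟨x, hx'⟩ : ↥N))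
        ?_ ?_ ?_ ?_ hmm
      · rintro x ⟨g, -, q, hq, rfl⟩ h'
        have key : (⟨⁅g, q⁆, h'⟩ : ↥N) =
            MulAut.conjNormal (H := N) g ⟨q, hq⟩ * (⟨q, hq⟩ : ↥N)⁻¹ := by
          ext
          simp [MulAut.conjNormal_apply, commutatorElement_def, mul_assoc]
        rw [key, map_mul, map_inv]
        exact hΘS g (Abelianization.of ⟨q, hq⟩)
      · intro h'
        refine ⟨1, ?_⟩
        have : (⟨(1 : G), h'⟩ : ↥N) = 1 := rfl
        rw [this, map_one, map_one]
      · intro x y hx hy ihx ihy h'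
        have hxN : x ∈ N := by rw [← hcl]; exact hx
        have hyN : y ∈ N := by rw [← hcl]; exact hy
        obtain ⟨a, ha⟩ := ihx hxN
        obtain ⟨c, hc⟩ := ihy hyN
        refine ⟨a * c, ?_⟩
        have key : (⟨x * y, h'⟩ : ↥N) = ⟨x, hxN⟩ * ⟨y, hyN⟩ := rfl
        rw [key, map_mul, map_mul, ha, hc]
      · intro x hx ihx h'
        have hxN : x ∈ N := by rw [← hcl]; exact hx
        obtain ⟨a, ha⟩ := ihx hxN
        refine ⟨a⁻¹, ?_⟩
        have key : (⟨x⁻¹, h'⟩ : ↥N) = (⟨x, hxN⟩ : ↥N)⁻¹ := rfl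
        rw [key, map_inv, map_inv, ha]
    exact main hm
  have hfinj : Function.Injective f := Finite.injective_iff_surjective.mpr hfsurj
  have hfpf : ∀ b : B, σ b = b → b = 1 := by
    intro b hb
    apply hfinj
    show σ b * b⁻¹ = σ 1 * 1⁻¹
    rw [hb, mul_inv_cancel, map_one, one_mul, inv_one]
  exact aux_card_modeq_one σ hσ3 hfpf

lemma aux_map_commutator {G : Type*} [Group G] (K : Subgroup G) :
    (commutator ↥K).map K.subtype = ⁅K, K⁆ := by
  rw [_root_.commutator_def, Subgroup.map_commutator]
  congr 1 <;> rw [← MonoidHom.range_eq_map, Subgroup.range_subtype]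

/-- The "derived-subgroup" rigidity: if `D²(Γ)` (as a subgroup of `Γ`) has commutative
automorphism group, then `D²(Γ)` is trivial. -/
lemma aux_bot_of_cyclic {Γ : Type*} [Group Γ]
    (h3 : Nat.card (Abelianization ↥(commutator Γ)) = 3)
    (hc : ∀ a b : MulAut ↥(⁅commutator Γ, commutator Γ⁆ : Subgroup Γ), a * b = b * a) :
    commutator ↥(commutator Γ) = ⊥ := by
  haveI : Fact (Nat.Prime 3) := ⟨by norm_num⟩
  haveI : IsCyclic (Abelianization ↥(commutator Γ)) := isCyclic_of_prime_card h3
  set K : Subgroup Γ := commutator Γ with hK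
  set M : Subgroup Γ := ⁅K, K⁆ with hM
  haveI : M.Normal := Subgroup.commutator_normal K K
  let ρ : Γ →* MulAut ↥M := MulAut.conjNormal
  have hKker : K ≤ ρ.ker := by
    rw [hK, _root_.commutator_def]
    refine Subgroup.commutator_le.mpr fun a _ b _ => ?_
    rw [MonoidHom.mem_ker, map_commutatorElement, commutatorElement_eq_one_iff_mul_comm]
    exact hc _ _
  have hbot : ⁅(⊤ : Subgroup ↥K), commutator ↥K⁆ = ⊥ := by
    rw [Subgroup.commutator_eq_bot_iff_le_centralizer]
    intro h _
    rw [Subgroup.mem_centralizer_iff]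
    intro m hm
    have hmM : (m : Γ) ∈ M := by
      have hmap : (commutator ↥K).map K.subtype = M := by
        rw [_root_.commutator_def, Subgroup.map_commutator]
        congr 1 <;> rw [← MonoidHom.range_eq_map, Subgroup.range_subtype]
      rw [← hmap]
      exact ⟨m, hm, rfl⟩
    have hρ : ρ (h : Γ) = 1 := MonoidHom.mem_ker.mp (hKker h.2)
    have happ : MulAut.conjNormal (H := M) (h : Γ) ⟨(m : Γ), hmM⟩ = ⟨(m : Γ), hmM⟩ := by
      show ρ (h : Γ) ⟨(m : Γ), hmM⟩ = ⟨(m : Γ), hmM⟩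
      rw [hρ]
      rfl
    have hΓ : (h : Γ) * m * (h : Γ)⁻¹ = m := by
      have := congrArg (Subtype.val) happ
      simpa [MulAut.conjNormal_apply] using this
    have hcomm : (h : Γ) * m = (m : Γ) * h := by
      rwa [mul_inv_eq_iff_eq_mul] at hΓ
    ext
    push_cast
    rw [← hcomm]
  calc commutator ↥K = ⁅(⊤ : Subgroup ↥K), commutator ↥K⁆ := aux_commutator_top_comm.symm
    _ = ⊥ := hbot

lemma aux_commutator_eq_bot_of_comm {N : Type*} [Group N] (h : ∀ a b : N, a * b = b * a) :
    commutator N = ⊥ := by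
  rw [_root_.commutator_def, Subgroup.commutator_eq_bot_iff_le_centralizer]
  intro g _
  rw [Subgroup.mem_centralizer_iff]
  exact fun m _ => h m g

lemma aux_comm_of_commutator_eq_bot {N : Type*} [Group N] (h : commutator N = ⊥) :
    ∀ a b : N, a * b = b * a := by
  intro a b
  have hmem : ⁅a, b⁆ ∈ commutator N :=
    Subgroup.commutator_mem_commutator (Subgroup.mem_top a) (Subgroup.mem_top b)
  rw [h, Subgroup.mem_bot] at hmem
  exact commutatorElement_eq_one_iff_mul_comm.mp hmem

/-- There is no perfect group of order `2 * p` for an odd prime `p`. -/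
lemma aux_no_perfect_two_mul_prime {N : Type*} [Group N] [Finite N] {p : ℕ} (hp : p.Prime)
    (hcard : Nat.card N = 2 * p) (hperf : commutator N = ⊤) : False := by
  haveI : Fact p.Prime := ⟨hp⟩
  haveI := Fintype.ofFinite N
  have hdvd : p ∣ Fintype.card N := by
    rw [← Nat.card_eq_fintype_card, hcard]; exact dvd_mul_left p 2
  obtain ⟨x, hx⟩ := exists_prime_orderOf_dvd_card p hdvd
  set P := Subgroup.zpowers x with hP
  have hPcard : Nat.card P = p := by rw [hP, Nat.card_zpowers, hx]
  have hPindex : P.index = 2 := by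
    have h1 := Subgroup.card_mul_index P
    rw [hPcard, hcard, mul_comm 2 p] at h1
    exact Nat.eq_of_mul_eq_mul_left hp.pos h1
  have hle : commutator N ≤ P := by
    rw [_root_.commutator_def]
    refine Subgroup.commutator_le.mpr fun a _ b _ => ?_
    simp only [commutatorElement_def, Subgroup.mul_mem_iff_of_index_two hPindex,
      Subgroup.inv_mem_iff]
    tauto
  rw [hperf] at hle
  have hPtop : P = ⊤ := top_le_iff.mp hle
  rw [hPtop, Subgroup.card_top, hcard] at hPcard
  have := hp.two_le
  omega

/-- A commutative group of order 10 is cyclic. -/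
lemma aux_isCyclic_card10 {N : Type*} [Group N] [Finite N] (hcard : Nat.card N = 10)
    (hcomm : ∀ a b : N, a * b = b * a) : IsCyclic N := by
  haveI := Fintype.ofFinite N
  haveI : Fact (Nat.Prime 2) := ⟨Nat.prime_two⟩
  haveI : Fact (Nat.Prime 5) := ⟨by norm_num⟩
  have h2 : (2 : ℕ) ∣ Fintype.card N := by rw [← Nat.card_eq_fintype_card, hcard]; norm_num
  have h5 : (5 : ℕ) ∣ Fintype.card N := by rw [← Nat.card_eq_fintype_card, hcard]; norm_num
  obtain ⟨x, hx⟩ := exists_prime_orderOf_dvd_card 2 h2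
  obtain ⟨y, hy⟩ := exists_prime_orderOf_dvd_card 5 h5
  have hcxy : Commute x y := hcomm x y
  have hco : Nat.Coprime (orderOf x) (orderOf y) := by rw [hx, hy]; norm_num
  have hord : orderOf (x * y) = 10 := by
    rw [hcxy.orderOf_mul_eq_mul_orderOf_of_coprime hco, hx, hy]
  exact isCyclic_of_orderOf_eq_card (x * y) (by rw [hord, hcard])

/-- If `Γ` is a group with `D(Γ)/D²(Γ)` cyclic of order 3 (equivalently, the abelianization
of the derived subgroup has cardinality 3) and `D²(Γ)` is finite of order at most 11, then
`D²(Γ)` is a 2-group. -/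
theorem stmt_5 (Γ : Type*) [Group Γ]
    (h3 : Nat.card (Abelianization ↥(commutator Γ)) = 3)
    [Finite ↥(commutator ↥(commutator Γ))]
    (h11 : Nat.card ↥(commutator ↥(commutator Γ)) ≤ 11) :
    ∃ k : ℕ, Nat.card ↥(commutator ↥(commutator Γ)) = 2 ^ k := by
  classical
  haveI : Fact (Nat.Prime 3) := ⟨by norm_num⟩
  -- the counting information
  have hmod := aux_card_ab_comm_modeq (↥(commutator Γ)) h3
  have hfact : Nat.card ↥(commutator ↥(commutator Γ)) =
      Nat.card (Abelianization ↥(commutator ↥(commutator Γ))) *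
        Nat.card ↥(commutator ↥(commutator ↥(commutator Γ))) :=
    Subgroup.card_eq_card_quotient_mul_card_subgroup _
  -- the cyclic kill
  have cycKill : IsCyclic ↥(commutator ↥(commutator Γ)) →
      commutator ↥(commutator Γ) = ⊥ := by
    intro hcy
    have hmap : (commutator ↥(commutator Γ)).map (commutator Γ).subtype =
        ⁅commutator Γ, commutator Γ⁆ := aux_map_commutator (commutator Γ)
    let e : ↥(commutator ↥(commutator Γ)) ≃* ↥(⁅commutator Γ, commutator Γ⁆ : Subgroup Γ) :=
      ((commutator ↥(commutator Γ)).equivMapOfInjective (commutator Γ).subtype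
        (commutator Γ).subtype_injective).trans (MulEquiv.subgroupCongr hmap)
    haveI : IsCyclic ↥(⁅commutator Γ, commutator Γ⁆ : Subgroup Γ) :=
      isCyclic_of_surjective e e.surjective
    exact aux_bot_of_cyclic h3 (fun a b => aux_mulAut_comm a b)
  have hmodb : Nat.card (Abelianization ↥(commutator ↥(commutator Γ))) % 3 = 1 % 3 := hmod
  have hbpos : 0 < Nat.card (Abelianization ↥(commutator ↥(commutator Γ))) := Nat.card_pos
  have hpos : 1 ≤ Nat.card ↥(commutator ↥(commutator Γ)) := Nat.card_pos
  -- case analysis on the order of D²(Γ)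
  generalize hn : Nat.card ↥(commutator ↥(commutator Γ)) = n at h11 hfact hpos ⊢
  interval_cases n
  -- n = 1
  · exact ⟨0, rfl⟩
  -- n = 2
  · exact ⟨1, rfl⟩
  -- n = 3
  · exfalso
    have hcy : IsCyclic ↥(commutator ↥(commutator Γ)) := isCyclic_of_prime_card (p := 3) hn
    have hbot := cycKill hcy
    rw [hbot] at hn
    simp [Subgroup.card_bot] at hn
  -- n = 4
  · exact ⟨2, rfl⟩
  -- n = 5
  · exfalso
    haveI : Fact (Nat.Prime 5) := ⟨by norm_num⟩
    have hcy : IsCyclic ↥(commutator ↥(commutator Γ)) := isCyclic_of_prime_card (p := 5) hn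
    have hbot := cycKill hcy
    rw [hbot] at hn
    simp [Subgroup.card_bot] at hn
  -- n = 6
  · exfalso
    set b := Nat.card (Abelianization ↥(commutator ↥(commutator Γ))) with hb
    have hdvd : b ∣ 6 := ⟨_, hfact⟩
    have hble : b ≤ 6 := Nat.le_of_dvd (by norm_num) hdvd
    have hb1 : b = 1 := by interval_cases b <;> omega
    have hc6 : Nat.card ↥(commutator ↥(commutator ↥(commutator Γ))) = 6 := by
      rw [hb1, one_mul] at hfact; omega
    have hperf : commutator ↥(commutator ↥(commutator Γ)) = ⊤ :=
      Subgroup.eq_top_of_card_eq _ (by rw [hc6, hn])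
    exact aux_no_perfect_two_mul_prime (by norm_num : Nat.Prime 3) (by rw [hn]) hperf
  -- n = 7
  · exfalso
    haveI : Fact (Nat.Prime 7) := ⟨by norm_num⟩
    have hcy : IsCyclic ↥(commutator ↥(commutator Γ)) := isCyclic_of_prime_card (p := 7) hn
    have hbot := cycKill hcy
    rw [hbot] at hn
    simp [Subgroup.card_bot] at hn
  -- n = 8
  · exact ⟨3, rfl⟩
  -- n = 9
  · exfalso
    have hcomm := IsPGroup.commutative_of_card_eq_prime_sq (p := 3)
      (G := ↥(commutator ↥(commutator Γ))) (by rw [hn]; norm_num)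
    have hbot := aux_commutator_eq_bot_of_comm hcomm
    rw [hbot] at hfact
    rw [Subgroup.card_bot, mul_one] at hfact
    omega
  -- n = 10
  · exfalso
    set b := Nat.card (Abelianization ↥(commutator ↥(commutator Γ))) with hb
    have hdvd : b ∣ 10 := ⟨_, hfact⟩
    have hble : b ≤ 10 := Nat.le_of_dvd (by norm_num) hdvd
    have hb110 : b = 1 ∨ b = 10 := by interval_cases b <;> omega
    rcases hb110 with hb1 | hb10
    · have hc10 : Nat.card ↥(commutator ↥(commutator ↥(commutator Γ))) = 10 := by
        rw [hb1, one_mul] at hfact; omega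
      have hperf : commutator ↥(commutator ↥(commutator Γ)) = ⊤ :=
        Subgroup.eq_top_of_card_eq _ (by rw [hc10, hn])
      exact aux_no_perfect_two_mul_prime (by norm_num : Nat.Prime 5) (by rw [hn]) hperf
    · have hc1 : Nat.card ↥(commutator ↥(commutator ↥(commutator Γ))) = 1 := by
        rw [hb10] at hfact; omega
      have hbot : commutator ↥(commutator ↥(commutator Γ)) = ⊥ :=
        Subgroup.eq_bot_of_card_eq _ hc1
      have hcomm := aux_comm_of_commutator_eq_bot hbot
      have hcy : IsCyclic ↥(commutator ↥(commutator Γ)) := aux_isCyclic_card10 hn hcomm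
      have hbot2 := cycKill hcy
      rw [hbot2] at hn
      simp [Subgroup.card_bot] at hn
  -- n = 11
  · exfalso
    haveI : Fact (Nat.Prime 11) := ⟨by norm_num⟩
    have hcy : IsCyclic ↥(commutator ↥(commutator Γ)) := isCyclic_of_prime_card (p := 11) hn
    have hbot := cycKill hcy
    rw [hbot] at hn
    simp [Subgroup.card_bot] at hn
end
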